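/- For all natural numbers k satisfying 0 < k < n, the bracket number satisfies [n choose k] = sum over all sequences 0 < i_1 < i_2 < ... < i_k ≤ n of the product prod_{j=1}^{k} C(i_j, j). -/

import Mathlib

/-- The bracket numbers, defined by the recursion
`[n, k] = [n-1, k] + C(n,k) * [n-1, k-1]` with `[n, 0] = 1` and `[n, n] = 1`. -/
def brack : ℕ → ℕ → ℕ
  | _, 0 => 1
  | 0, _ + 1 => 0
  | n + 1, k + 1 =>
    if n + 1 = k + 1 then 1
    else brack n (k + 1) + Nat.choose (n + 1) (k + 1) * brack n k

/-- Auxiliary sum. -/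
def brackS (n k : ℕ) : ℕ :=
  ∑ f ∈ Finset.univ.filter
      (fun f : Fin k → Fin (n + 1) =>
        (∀ a b : Fin k, a < b → f a < f b) ∧ ∀ j : Fin k, (j : ℕ) < (f j : ℕ)),
    ∏ j : Fin k, Nat.choose (f j : ℕ) ((j : ℕ) + 1)

lemma brackS_eq_zero {n k : ℕ} (h : n < k) : brackS n k = 0 := by
  unfold brackS
  rw [Finset.filter_false_of_mem, Finset.sum_empty]
  intro f _ hf
  have h1 := hf.2 ⟨n, h⟩
  have h2 := (f ⟨n, h⟩).isLt
  simp only [Fin.val_mk] at h1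
  omega

lemma brack_eq_zero : ∀ {n k : ℕ}, n < k → brack n k = 0
  | 0, _+1, _ => rfl
  | n+1, k+1, h => by
    have h1 : brack n (k+1) = 0 := brack_eq_zero (by omega)
    have h2 : brack n k = 0 := brack_eq_zero (by omega)
    simp only [brack, if_neg (by omega : ¬ n + 1 = k + 1), h1, h2]
    simp

lemma brackS_zero (n : ℕ) : brackS n 0 = 1 := by
  unfold brackS
  rw [Finset.filter_true_of_mem (fun f _ => ⟨fun a => a.elim0, fun j => j.elim0⟩)]
  simp

lemma brackS_rec (n k : ℕ) :
    brackS (n+1) (k+1) = brackS n (k+1) + Nat.choose (n+1) (k+1) * brackS n k := by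
  classical
  unfold brackS
  rw [← Finset.sum_filter_add_sum_filter_not
      (Finset.univ.filter (fun f : Fin (k+1) → Fin (n+2) =>
        (∀ a b : Fin (k+1), a < b → f a < f b) ∧ ∀ j : Fin (k+1), (j : ℕ) < (f j : ℕ)))
      (fun f => f (Fin.last k) = Fin.last (n+1))]
  rw [Finset.filter_filter, Finset.filter_filter, add_comm]
  congr 1
  · -- last value < n+1 : reduces to brackS n (k+1)
    refine Finset.sum_nbij' (fun f j => (⟨min (f j : ℕ) n, by omega⟩ : Fin (n+1)))
      (fun g j => (g j).castSucc) ?_ ?_ ?_ ?_ ?_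
    · intro f hf
      simp only [Finset.mem_filter, Finset.mem_univ, true_and] at hf ⊢
      obtain ⟨⟨hsm, hlb⟩, hne⟩ := hf
      have key : ∀ j : Fin (k+1), (f j : ℕ) ≤ n := by
        intro j
        rcases eq_or_lt_of_le (Fin.le_last j) with h | h
        · have h2 : (f (Fin.last k) : ℕ) ≠ n + 1 := fun h => hne (Fin.ext h)
          have := (f (Fin.last k)).isLt
          rw [h]
          omega
        · have h1 := Fin.lt_def.mp (hsm _ _ h)
          have h2 : (f (Fin.last k) : ℕ) ≠ n + 1 := fun h => hne (Fin.ext h)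
          have := (f (Fin.last k)).isLt
          omega
      refine ⟨fun a b hab => ?_, fun j => ?_⟩
      · have h3 := Fin.lt_def.mp (hsm a b hab)
        have h4 := key a; have h5 := key b
        simp only [Fin.mk_lt_mk]
        omega
      · have h3 := hlb j; have h4 := key j
        show (j : ℕ) < min (f j : ℕ) n
        omega
    · intro g hg
      simp only [Finset.mem_filter, Finset.mem_univ, true_and] at hg ⊢
      obtain ⟨hsm, hlb⟩ := hg
      refine ⟨⟨fun a b hab => ?_, fun j => ?_⟩, ?_⟩
      · exact Fin.castSucc_lt_castSucc_iff.mpr (hsm a b hab)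
      · simpa using hlb j
      · exact (Fin.castSucc_lt_last _).ne
    · intro f hf
      simp only [Finset.mem_filter, Finset.mem_univ, true_and] at hf
      obtain ⟨⟨hsm, hlb⟩, hne⟩ := hf
      have key : ∀ j : Fin (k+1), (f j : ℕ) ≤ n := by
        intro j
        rcases eq_or_lt_of_le (Fin.le_last j) with h | h
        · have h2 : (f (Fin.last k) : ℕ) ≠ n + 1 := fun h => hne (Fin.ext h)
          have := (f (Fin.last k)).isLt
          rw [h]
          omega
        · have h1 := Fin.lt_def.mp (hsm _ _ h)
          have h2 : (f (Fin.last k) : ℕ) ≠ n + 1 := fun h => hne (Fin.ext h)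
          have := (f (Fin.last k)).isLt
          omega
      funext j
      apply Fin.ext
      have := key j
      simp only [Fin.coe_castSucc, Fin.val_mk]
      omega
    · intro g hg
      funext j
      apply Fin.ext
      have := (g j).isLt
      simp only [Fin.coe_castSucc, Fin.val_mk]
      omega
    · intro f hf
      simp only [Finset.mem_filter, Finset.mem_univ, true_and] at hf
      obtain ⟨⟨hsm, hlb⟩, hne⟩ := hf
      have key : ∀ j : Fin (k+1), (f j : ℕ) ≤ n := by
        intro j
        rcases eq_or_lt_of_le (Fin.le_last j) with h | h
        · have h2 : (f (Fin.last k) : ℕ) ≠ n + 1 := fun h => hne (Fin.ext h)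
          have := (f (Fin.last k)).isLt
          rw [h]
          omega
        · have h1 := Fin.lt_def.mp (hsm _ _ h)
          have h2 : (f (Fin.last k) : ℕ) ≠ n + 1 := fun h => hne (Fin.ext h)
          have := (f (Fin.last k)).isLt
          omega
      apply Finset.prod_congr rfl
      intro j _
      have := key j
      congr 1
      simp only [Fin.val_mk]
      omega
  · -- last value = n+1 : reduces to choose * brackS n k
    rw [Finset.mul_sum]
    refine Finset.sum_nbij'
      (fun f (j : Fin k) => (⟨min (f j.castSucc : ℕ) n, by omega⟩ : Fin (n+1)))
      (fun g => Fin.snoc (fun j => (g j).castSucc) (Fin.last (n+1))) ?_ ?_ ?_ ?_ ?_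
    · intro f hf
      simp only [Finset.mem_filter, Finset.mem_univ, true_and] at hf ⊢
      obtain ⟨⟨hsm, hlb⟩, hlast⟩ := hf
      have key : ∀ j : Fin k, (f j.castSucc : ℕ) ≤ n := by
        intro j
        have h1 := Fin.lt_def.mp (hsm _ _ (Fin.castSucc_lt_last j))
        rw [hlast, Fin.val_last] at h1
        omega
      refine ⟨fun a b hab => ?_, fun j => ?_⟩
      · have h1 := Fin.lt_def.mp (hsm _ _ (Fin.castSucc_lt_castSucc_iff.mpr hab))
        have := key a; have := key b
        simp only [Fin.mk_lt_mk]
        omega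
      · have h1 := hlb j.castSucc
        rw [Fin.coe_castSucc] at h1
        have := key j
        show (j : ℕ) < min (f j.castSucc : ℕ) n
        omega
    · intro g hg
      simp only [Finset.mem_filter, Finset.mem_univ, true_and] at hg ⊢
      obtain ⟨hsm, hlb⟩ := hg
      have hkn : k ≤ n ∨ k = 0 := by
        rcases Nat.eq_zero_or_pos k with h | h
        · exact Or.inr h
        · left
          set x : Fin k := ⟨k - 1, by omega⟩ with hx
          have h1 := hlb x
          have h2 := (g x).isLt
          have h3 : (x : ℕ) = k - 1 := rfl
          omega
      have hval : ∀ j : Fin (k+1),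
          ((Fin.snoc (fun j : Fin k => (g j).castSucc) (Fin.last (n+1)) :
              Fin (k+1) → Fin (n+2)) j : ℕ)
            = if h : (j : ℕ) < k then (g ⟨j, h⟩ : ℕ) else n + 1 := by
        intro j
        induction j using Fin.lastCases with
        | last => simp [Fin.snoc_last]
        | cast i =>
          rw [Fin.snoc_castSucc, dif_pos (by simpa using i.isLt)]
          simp
      refine ⟨⟨fun a b hab => ?_, fun j => ?_⟩, ?_⟩
      · rw [Fin.lt_def, hval, hval]
        have hab' := Fin.lt_def.mp hab
        have ha2 := a.isLt
        have hb2 := b.isLt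
        split
        · split
          · rename_i ha hb
            have := Fin.lt_def.mp (hsm ⟨a, ha⟩ ⟨b, hb⟩ (Fin.mk_lt_mk.mpr hab'))
            exact this
          · rename_i ha _
            have := (g ⟨a, ha⟩).isLt
            omega
        · rename_i ha
          split
          · omega
          · omega
      · rw [hval]
        split
        · rename_i h
          have := hlb ⟨j, h⟩
          simpa using this
        · have := j.isLt
          omega
      · apply Fin.ext
        rw [hval]
        simp
    · intro f hf
      simp only [Finset.mem_filter, Finset.mem_univ, true_and] at hf
      obtain ⟨⟨hsm, hlb⟩, hlast⟩ := hf
      have key : ∀ j : Fin k, (f j.castSucc : ℕ) ≤ n := by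
        intro j
        have h1 := Fin.lt_def.mp (hsm _ _ (Fin.castSucc_lt_last j))
        rw [hlast, Fin.val_last] at h1
        omega
      funext j
      induction j using Fin.lastCases with
      | last => simp only [Fin.snoc_last, hlast]
      | cast i =>
        simp only [Fin.snoc_castSucc]
        apply Fin.ext
        have := key i
        simp only [Fin.coe_castSucc, Fin.val_mk]
        omega
    · intro g hg
      funext j
      apply Fin.ext
      have := (g j).isLt
      simp only [Fin.snoc_castSucc, Fin.coe_castSucc, Fin.val_mk]
      omega
    · intro f hf
      simp only [Finset.mem_filter, Finset.mem_univ, true_and] at hf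
      obtain ⟨⟨hsm, hlb⟩, hlast⟩ := hf
      have key : ∀ j : Fin k, (f j.castSucc : ℕ) ≤ n := by
        intro j
        have h1 := Fin.lt_def.mp (hsm _ _ (Fin.castSucc_lt_last j))
        rw [hlast, Fin.val_last] at h1
        omega
      rw [Fin.prod_univ_castSucc, hlast, mul_comm]
      simp only [Fin.val_last]
      congr 1
      apply Finset.prod_congr rfl
      intro j _
      have := key j
      simp only [Fin.coe_castSucc, Fin.val_mk]
      congr 1
      omega
  
lemma brack_one (n : ℕ) : brack n n = 1 := by
  cases n with
  | zero => rfl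
  | succ m => simp [brack]

lemma brack_eq_brackS : ∀ n k, brack n k = brackS n k := by
  intro n
  induction n with
  | zero =>
    intro k
    cases k with
    | zero => rw [brackS_zero]; rfl
    | succ m => rw [brack_eq_zero (by omega), brackS_eq_zero (by omega)]
  | succ m ih =>
    intro k
    cases k with
    | zero => rw [brackS_zero]; rfl
    | succ j =>
      rw [brackS_rec]
      by_cases h : m + 1 = j + 1
      · have hmj : m = j := by omega
        subst hmj
        rw [brackS_eq_zero (by omega), ← ih, brack_one]
        simp [brack_one]
      · simp only [brack, if_neg h, ih]

/-- For `0 < k < n`,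
`[n, k] = ∑_{0 < i₁ < i₂ < ⋯ < i_k ≤ n} ∏_{j=1}^{k} C(i_j, j)`. -/
theorem brack_eq_sum_prod_choose (n k : ℕ) (h0 : 0 < k) (hkn : k < n) :
    brack n k =
      ∑ f ∈ Finset.univ.filter
        (fun f : Fin k → Fin (n + 1) =>
          (∀ a b : Fin k, a < b → f a < f b) ∧ 0 < (f ⟨0, h0⟩ : ℕ)),
        ∏ j : Fin k, Nat.choose (f j : ℕ) ((j : ℕ) + 1) := by
  rw [brack_eq_brackS]
  unfold brackS
  apply Finset.sum_congr
  · apply Finset.filter_congr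
    intro f _
    constructor
    · rintro ⟨hsm, hlb⟩
      exact ⟨hsm, hlb ⟨0, h0⟩⟩
    · rintro ⟨hsm, hlb⟩
      refine ⟨hsm, fun j => ?_⟩
      have key : ∀ m : ℕ, ∀ hm : m < k, (m : ℕ) < (f ⟨m, hm⟩ : ℕ) := by
        intro m
        induction m with
        | zero => intro hm; exact hlb
        | succ i ihi =>
          intro hm
          have h1 := ihi (by omega)
          have h2 := Fin.lt_def.mp (hsm ⟨i, by omega⟩ ⟨i+1, hm⟩ (Fin.mk_lt_mk.mpr (by omega)))
          omega
      have := key j.1 j.2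
      simpa using this
  · intro f _; rfl
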